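/- With notation of the Kostant cascade and layers, Δ⁺_r ∪ {β_r} = {α ∈ Δ⁺ : α ⊥ β_i for all i < r, and ⟨α, β_r⟩ > 0}. Consequently the subspaces l_r = g_{β_r} + Σ_{α ∈ Δ⁺_r} g_α satisfy [l_r, l_s] ⊂ l_t where t = min{r,s}. -/

import Mathlib

open scoped RealInnerProductSpace

/-- Induction principle for membership in a set-indexed supremum of submodules. -/
private lemma biSup_ind {R M ι : Type*} [Semiring R] [AddCommMonoid M] [Module R M]
    {s : Set ι} {p : ι → Submodule R M} {motive : M → Prop} {x : M}
    (hx : x ∈ ⨆ i ∈ s, p i)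
    (mem : ∀ i ∈ s, ∀ x ∈ p i, motive x) (zero : motive 0)
    (add : ∀ x y, motive x → motive y → motive (x + y)) : motive x := by
  rw [iSup_subtype'] at hx
  exact Submodule.iSup_induction (motive := motive) _ hx (fun i x h => mem i.1 i.2 x h) zero add

/-- For the Kostant cascade `β₁, …, β_m` and its layers `Δ⁺_r` in
the restricted root system of a real simple Lie algebra `g`, one has
`Δ⁺_r ∪ {β_r} = {α ∈ Δ⁺ : α ⊥ β_i for i < r and ⟨α, β_r⟩ > 0}`, and consequently
the subspaces `l_r = g_{β_r} + Σ_{α ∈ Δ⁺_r} g_α` satisfy `[l_r, l_s] ⊆ l_{min r s}`. -/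
theorem stepwise_sq_int_stmt7
    {V : Type*} [NormedAddCommGroup V] [InnerProductSpace ℝ V]
    (Δ Δpos : Set V) (hfin : Δ.Finite)
    (h0 : (0 : V) ∉ Δ)
    (hrefl : ∀ α ∈ Δ, ∀ γ ∈ Δ, γ - (2 * ⟪γ, α⟫ / ⟪α, α⟫) • α ∈ Δ)
    (hint : ∀ α ∈ Δ, ∀ γ ∈ Δ, ∃ k : ℤ, 2 * ⟪γ, α⟫ / ⟪α, α⟫ = (k : ℝ))
    (hsub : Δpos ⊆ Δ)
    (hpos : ∀ α ∈ Δ, (α ∈ Δpos ↔ -α ∉ Δpos))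
    (hclosed : ∀ α ∈ Δpos, ∀ γ ∈ Δpos, α + γ ∈ Δ → α + γ ∈ Δpos)
    {m : ℕ} (β : Fin m → V)
    (hβpos : ∀ r, β r ∈ Δpos)
    (horth : ∀ r i : Fin m, i < r → ⟪β r, β i⟫ = 0)
    (hmax : ∀ r : Fin m, ∀ α ∈ Δpos, (∀ i : Fin m, i < r → ⟪α, β i⟫ = 0) →
      α - β r ∈ AddSubmonoid.closure Δpos → α = β r)
    (hcomplete : ∀ α ∈ Δpos, ∃ i : Fin m, ⟪α, β i⟫ ≠ 0)
    (layer : Fin m → Set V)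
    (hlayer : ∀ r : Fin m, layer r
      = {α ∈ Δpos | (∀ i : Fin m, i < r → α ∉ layer i) ∧ β r - α ∈ Δpos})
    -- the Lie algebra `g` with its restricted root spaces `rs γ = g_γ`
    {g : Type*} [LieRing g] [LieAlgebra ℝ g]
    (rs : V → Submodule ℝ g)
    (hrs0 : ∀ γ : V, γ ∉ Δ → γ ≠ 0 → rs γ = ⊥)
    (hbr : ∀ (γ δ : V) (x y : g), x ∈ rs γ → y ∈ rs δ → ⁅x, y⁆ ∈ rs (γ + δ)) :
    (∀ r : Fin m, layer r ∪ {β r}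
      = {α ∈ Δpos | (∀ i : Fin m, i < r → ⟪α, β i⟫ = 0) ∧ 0 < ⟪α, β r⟫}) ∧
    (∀ r s : Fin m, ∀ x ∈ rs (β r) ⊔ ⨆ α ∈ layer r, rs α,
      ∀ y ∈ rs (β s) ⊔ ⨆ α ∈ layer s, rs α,
        ⁅x, y⁆ ∈ rs (β (min r s)) ⊔ ⨆ α ∈ layer (min r s), rs α) := by
  classical
  -- positivity of inner self
  have hip : ∀ {α : V}, α ∈ Δ → 0 < ⟪α, α⟫ := by
    intro α hα
    have hne : α ≠ 0 := fun h => h0 (h ▸ hα)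
    rw [real_inner_self_eq_norm_mul_norm]
    have := norm_pos_iff.mpr hne
    exact mul_pos this this
  -- Δ is symmetric
  have hneg : ∀ {α : V}, α ∈ Δ → -α ∈ Δ := by
    intro α hα
    have h := hrefl α hα α hα
    have hs : ⟪α, α⟫ ≠ 0 := ne_of_gt (hip hα)
    rw [show 2 * ⟪α, α⟫ / ⟪α, α⟫ = (2 : ℝ) by field_simp] at h
    have : α - (2:ℝ) • α = -α := by module
    rwa [this] at h
  -- sum of two roots with negative inner product is a root
  have hsum : ∀ {α δ : V}, α ∈ Δ → δ ∈ Δ → ⟪α, δ⟫ < 0 → α + δ ≠ 0 → α + δ ∈ Δ := by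
    intro α δ hα hδ hneg0 hne0
    obtain ⟨n, hn⟩ := hint δ hδ α hα
    obtain ⟨k, hk⟩ := hint α hα δ hδ
    have hδδ : 0 < ⟪δ, δ⟫ := hip hδ
    have hαα : 0 < ⟪α, α⟫ := hip hα
    have hδα : ⟪δ, α⟫ = ⟪α, δ⟫ := real_inner_comm α δ
    have hnneg : (n : ℝ) < 0 := by
      rw [← hn]; exact div_neg_of_neg_of_pos (by linarith) hδδ
    have hkneg : (k : ℝ) < 0 := by
      rw [← hk, hδα]; exact div_neg_of_neg_of_pos (by linarith) hαα
    have hn1 : n ≤ -1 := by have : n < 0 := by exact_mod_cast hnneg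
                            omega
    have hk1 : k ≤ -1 := by have : k < 0 := by exact_mod_cast hkneg
                            omega
    by_cases hcn : n = -1
    · have h := hrefl δ hδ α hα
      rw [hn, hcn] at h
      have : α - ((-1 : ℤ) : ℝ) • δ = α + δ := by push_cast; module
      rwa [this] at h
    by_cases hck : k = -1
    · have h := hrefl α hα δ hδ
      rw [hk, hck] at h
      have : δ - ((-1 : ℤ) : ℝ) • α = α + δ := by push_cast; module
      rwa [this] at h
    exfalso
    have hn2 : n ≤ -2 := by omega
    have hk2 : k ≤ -2 := by omega
    have h1 : (n : ℝ) * ⟪δ, δ⟫ = 2 * ⟪α, δ⟫ := by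
      rw [← hn]; field_simp
    have h2 : (k : ℝ) * ⟪α, α⟫ = 2 * ⟪α, δ⟫ := by
      rw [← hk, hδα]; field_simp
    have hcs : ⟪α, δ⟫ * ⟪α, δ⟫ ≤ ⟪α, α⟫ * ⟪δ, δ⟫ := real_inner_mul_inner_self_le α δ
    have hprodle : (n : ℝ) * (k : ℝ) ≤ 4 := by
      have hpe : ((n : ℝ) * ⟪δ, δ⟫) * ((k : ℝ) * ⟪α, α⟫) = 4 * (⟪α, δ⟫ * ⟪α, δ⟫) := by
        rw [h1, h2]; ring
      nlinarith [mul_pos hαα hδδ]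
    have hprodge : (4 : ℝ) ≤ (n : ℝ) * (k : ℝ) := by
      have : (4 : ℤ) ≤ n * k := by nlinarith
      exact_mod_cast this
    have heq : (n : ℤ) * k = 4 := by
      have : ((n : ℝ) * k) = 4 := le_antisymm hprodle hprodge
      exact_mod_cast this
    have hn2' : n = -2 := by nlinarith
    have hk2' : k = -2 := by nlinarith
    rw [hn2'] at h1; rw [hk2'] at h2; push_cast at h1 h2
    have hz : ⟪α + δ, α + δ⟫ = 0 := by
      rw [real_inner_add_add_self]; linarith
    exact hne0 (inner_self_eq_zero.mp hz)
  -- sum of two positive roots is nonzero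
  have hpne : ∀ {α δ : V}, α ∈ Δpos → δ ∈ Δpos → α + δ ≠ 0 := by
    intro α δ hα hδ h
    have hδn : δ = -α := by linear_combination (norm := module) h
    have := (hpos α (hsub hα)).mp hα
    exact this (hδn ▸ hδ)
  -- key nonnegativity: if α ⊥ β_j for j < i then ⟨α, β_i⟩ ≥ 0
  have hL2 : ∀ (i : Fin m) (α : V), α ∈ Δpos → (∀ j : Fin m, j < i → ⟪α, β j⟫ = 0) →
      0 ≤ ⟪α, β i⟫ := by
    intro i α hαp hjz
    by_contra hlt
    push_neg at hlt
    have hβi := hβpos i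
    have hΔ : α + β i ∈ Δ := hsum (hsub hαp) (hsub hβi) hlt (hpne hαp hβi)
    have hp : α + β i ∈ Δpos := hclosed α hαp (β i) hβi hΔ
    have horthsum : ∀ j : Fin m, j < i → ⟪α + β i, β j⟫ = 0 := by
      intro j hj
      rw [inner_add_left, hjz j hj, horth i j hj]; ring
    have hcl : (α + β i) - β i ∈ AddSubmonoid.closure Δpos := by
      have : (α + β i) - β i = α := by abel
      rw [this]; exact AddSubmonoid.subset_closure hαp
    have hz : α + β i = β i := hmax i (α + β i) hp horthsum hcl
    have : α = 0 := by linear_combination (norm := module) hz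
    exact h0 (this ▸ hsub hαp)
  -- orthogonality for summands of β r
  have hFWDo : ∀ (r : Fin m) (α : V), α ∈ Δpos → β r - α ∈ Δpos →
      ∀ i : Fin m, i < r → ⟪α, β i⟫ = 0 := by
    intro r α hαp hγp
    have H : ∀ n : ℕ, ∀ i : Fin m, i.val = n → i < r → ⟪α, β i⟫ = 0 := by
      intro n
      induction n using Nat.strong_induction_on with
      | _ n IH =>
        intro i hi hir
        have hjz : ∀ j : Fin m, j < i → ⟪α, β j⟫ = 0 := fun j hj =>
          IH j.val (hi ▸ hj) j rfl (lt_trans hj hir)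
        have h1 : 0 ≤ ⟪α, β i⟫ := hL2 i α hαp hjz
        have hγz : ∀ j : Fin m, j < i → ⟪β r - α, β j⟫ = 0 := by
          intro j hj
          rw [inner_sub_left, horth r j (lt_trans hj hir), hjz j hj]; ring
        have h2 : 0 ≤ ⟪β r - α, β i⟫ := hL2 i _ hγp hγz
        rw [inner_sub_left, horth r i hir] at h2
        linarith
    exact fun i hir => H i.val i rfl hir
  -- strict positivity for summands of β r
  have hstrict : ∀ (r : Fin m) (α : V), α ∈ Δpos → β r - α ∈ Δpos → 0 < ⟪α, β r⟫ := by
    intro r α hαp hγp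
    have hz := hFWDo r α hαp hγp
    have h1 : 0 ≤ ⟪α, β r⟫ := hL2 r α hαp hz
    rcases h1.lt_or_eq with h | h
    · exact h
    exfalso
    -- ⟨α, β r⟩ = 0; reflect β r - α in β r to get -(α + β r) ∈ Δ
    have hβΔ : β r ∈ Δ := hsub (hβpos r)
    have hco : 2 * ⟪β r - α, β r⟫ / ⟪β r, β r⟫ = (2 : ℝ) := by
      rw [inner_sub_left, ← h]
      have := ne_of_gt (hip hβΔ)
      field_simp
      rw [sub_zero]
    have hrf := hrefl (β r) hβΔ (β r - α) (hsub hγp)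
    rw [hco] at hrf
    have he : (β r - α) - (2:ℝ) • β r = -(α + β r) := by module
    rw [he] at hrf
    have hΔ : α + β r ∈ Δ := by
      have := hneg hrf
      rwa [neg_neg] at this
    have hp : α + β r ∈ Δpos := hclosed α hαp (β r) (hβpos r) hΔ
    have horthsum : ∀ j : Fin m, j < r → ⟪α + β r, β j⟫ = 0 := by
      intro j hj; rw [inner_add_left, hz j hj, horth r j hj]; ring
    have hcl : (α + β r) - β r ∈ AddSubmonoid.closure Δpos := by
      have : (α + β r) - β r = α := by abel
      rw [this]; exact AddSubmonoid.subset_closure hαp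
    have heq : α + β r = β r := hmax r (α + β r) hp horthsum hcl
    have : α = 0 := by linear_combination (norm := module) heq
    exact h0 (this ▸ hsub hαp)
  -- the first statement
  have key : ∀ r : Fin m, layer r ∪ {β r}
      = {α ∈ Δpos | (∀ i : Fin m, i < r → ⟪α, β i⟫ = 0) ∧ 0 < ⟪α, β r⟫} := by
    intro r
    ext α
    simp only [Set.mem_union, Set.mem_singleton_iff, Set.mem_setOf_eq]
    constructor
    · rintro (hl | rfl)
      · rw [hlayer r] at hl
        obtain ⟨hαp, -, hγ⟩ := hl
        exact ⟨hαp, hFWDo r α hαp hγ, hstrict r α hαp hγ⟩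
      · exact ⟨hβpos r, fun i hi => horth r i hi, hip (hsub (hβpos r))⟩
    · rintro ⟨hαp, hz, hgt⟩
      by_cases hbe : α = β r
      · exact Or.inr hbe
      left
      rw [hlayer r]
      have hαΔ : α ∈ Δ := hsub hαp
      have hβΔ : β r ∈ Δ := hsub (hβpos r)
      refine ⟨hαp, ?_, ?_⟩
      · intro i hi hmem
        rw [hlayer i] at hmem
        obtain ⟨h1, -, h3⟩ := hmem
        exact absurd (hz i hi) (ne_of_gt (hstrict i α h1 h3))
      · -- β r - α ∈ Δpos
        obtain ⟨k, hk⟩ := hint (β r) hβΔ α hαΔ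
        obtain ⟨l, hl⟩ := hint α hαΔ (β r) hβΔ
        have hαα : 0 < ⟪α, α⟫ := hip hαΔ
        have hββ : 0 < ⟪β r, β r⟫ := hip hβΔ
        have hc : ⟪β r, α⟫ = ⟪α, β r⟫ := real_inner_comm α (β r)
        have hkpos : (0 : ℝ) < (k : ℝ) := by
          rw [← hk]; positivity
        have hlpos : (0 : ℝ) < (l : ℝ) := by
          rw [← hl, hc]; positivity
        have hk1 : 1 ≤ k := by have : 0 < k := by exact_mod_cast hkpos
                               omega
        have hl1 : 1 ≤ l := by have : 0 < l := by exact_mod_cast hlpos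
                               omega
        -- first: α - β r ∈ Δ
        have hd : α - β r ∈ Δ := by
          by_cases hck : k = 1
          · have h := hrefl (β r) hβΔ α hαΔ
            rw [hk, hck] at h
            have : α - ((1 : ℤ) : ℝ) • β r = α - β r := by push_cast; module
            rwa [this] at h
          by_cases hcl : l = 1
          · have h := hrefl α hαΔ (β r) hβΔ
            rw [hl, hcl] at h
            have : β r - ((1 : ℤ) : ℝ) • α = β r - α := by push_cast; module
            rw [this] at h
            have := hneg h
            rwa [neg_sub] at this
          exfalso
          have hk2 : 2 ≤ k := by omega
          have hl2 : 2 ≤ l := by omega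
          have h1 : (k : ℝ) * ⟪β r, β r⟫ = 2 * ⟪α, β r⟫ := by
            rw [← hk]; field_simp
          have h2 : (l : ℝ) * ⟪α, α⟫ = 2 * ⟪α, β r⟫ := by
            rw [← hl, hc]; field_simp
          have hcs : ⟪α, β r⟫ * ⟪α, β r⟫ ≤ ⟪α, α⟫ * ⟪β r, β r⟫ :=
            real_inner_mul_inner_self_le α (β r)
          have hprodle : (k : ℝ) * (l : ℝ) ≤ 4 := by
            have hpe : ((k : ℝ) * ⟪β r, β r⟫) * ((l : ℝ) * ⟪α, α⟫)
                = 4 * (⟪α, β r⟫ * ⟪α, β r⟫) := by rw [h1, h2]; ring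
            nlinarith [mul_pos hαα hββ]
          have hprodge : (4 : ℝ) ≤ (k : ℝ) * (l : ℝ) := by
            have : (4 : ℤ) ≤ k * l := by nlinarith
            exact_mod_cast this
          have heq : (k : ℤ) * l = 4 := by
            have : ((k : ℝ) * l) = 4 := le_antisymm hprodle hprodge
            exact_mod_cast this
          have hkk : k = 2 := by nlinarith
          have hll : l = 2 := by nlinarith
          rw [hkk] at h1; rw [hll] at h2; push_cast at h1 h2
          have hz2 : ⟪α - β r, α - β r⟫ = 0 := by
            rw [real_inner_sub_sub_self]; linarith
          exact hbe (sub_eq_zero.mp (inner_self_eq_zero.mp hz2))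
        -- now conclude
        by_cases hdp : α - β r ∈ Δpos
        · exact absurd (hmax r α hαp hz (AddSubmonoid.subset_closure hdp)) hbe
        · have hiff := hpos (β r - α) (by have := hneg hd; rwa [neg_sub] at this)
          rw [neg_sub] at hiff
          exact hiff.mpr hdp
  refine ⟨key, ?_⟩
  -- the bracket statement
  intro r s x hx y hy
  set t := min r s with ht
  have hchar : ∀ (u : Fin m) (γ : V), γ ∈ layer u ∪ {β u} →
      γ ∈ Δpos ∧ (∀ i : Fin m, i < u → ⟪γ, β i⟫ = 0) ∧ 0 < ⟪γ, β u⟫ := by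
    intro u γ hγ
    rw [key u] at hγ
    exact hγ
  have hLle : ∀ γ ∈ layer t ∪ {β t}, rs γ ≤ rs (β t) ⊔ ⨆ α ∈ layer t, rs α := by
    intro γ hγ
    rcases hγ with hγ | hγ
    · exact le_trans (le_iSup₂ (f := fun α (_ : α ∈ layer t) => rs α) γ hγ) le_sup_right
    · rw [Set.mem_singleton_iff] at hγ
      exact hγ ▸ le_sup_left
  have hmem : ∀ γ ∈ layer r ∪ {β r}, ∀ δ ∈ layer s ∪ {β s}, ∀ x ∈ rs γ, ∀ y ∈ rs δ,
      ⁅x, y⁆ ∈ rs (β t) ⊔ ⨆ α ∈ layer t, rs α := by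
    intro γ hγ δ hδ x hx y hy
    obtain ⟨hγp, hγz, hγpos⟩ := hchar r γ hγ
    obtain ⟨hδp, hδz, hδpos⟩ := hchar s δ hδ
    have hbr' := hbr γ δ x y hx hy
    by_cases hΔ : γ + δ ∈ Δ
    · have hsump : γ + δ ∈ Δpos := hclosed γ hγp δ hδp hΔ
      have htr : t ≤ r := min_le_left r s
      have hts : t ≤ s := min_le_right r s
      have hr0 : ∀ i : Fin m, i < t → ⟪γ + δ, β i⟫ = 0 := by
        intro i hi
        rw [inner_add_left, hγz i (lt_of_lt_of_le hi htr), hδz i (lt_of_lt_of_le hi hts)]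
        ring
      have hγt : 0 ≤ ⟪γ, β t⟫ := by
        rcases lt_or_eq_of_le htr with h | h
        · exact (hγz t h).ge
        · rw [h]; exact hγpos.le
      have hδt : 0 ≤ ⟪δ, β t⟫ := by
        rcases lt_or_eq_of_le hts with h | h
        · exact (hδz t h).ge
        · rw [h]; exact hδpos.le
      have hpos' : 0 < ⟪γ + δ, β t⟫ := by
        rw [inner_add_left]
        rcases min_choice r s with h | h
        · have h1 : 0 < ⟪γ, β t⟫ := by rw [← ht] at h; rw [h]; exact hγpos
          linarith
        · have h1 : 0 < ⟪δ, β t⟫ := by rw [← ht] at h; rw [h]; exact hδpos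
          linarith
      have hmem' : γ + δ ∈ layer t ∪ {β t} := by
        rw [key t]
        exact ⟨hsump, hr0, hpos'⟩
      exact hLle _ hmem' hbr'
    · have hne : γ + δ ≠ 0 := hpne hγp hδp
      rw [hrs0 _ hΔ hne] at hbr'
      have : ⁅x, y⁆ = 0 := by simpa using hbr'
      rw [this]
      exact Submodule.zero_mem _
  -- convert the sup to a biSup over `layer r ∪ {β r}`
  have hconv : ∀ u : Fin m,
      rs (β u) ⊔ ⨆ α ∈ layer u, rs α = ⨆ γ ∈ layer u ∪ {β u}, rs γ := by
    intro u
    rw [Set.union_singleton, iSup_insert]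
  rw [hconv r] at hx
  rw [hconv s] at hy
  refine biSup_ind (motive := fun z => ⁅z, y⁆ ∈ rs (β t) ⊔ ⨆ α ∈ layer t, rs α) hx
    (fun γ hγ x' hx' => ?_) (by simp) (fun a b ha hb => by simp only [add_lie]; exact add_mem ha hb)
  refine biSup_ind (motive := fun z => ⁅x', z⁆ ∈ rs (β t) ⊔ ⨆ α ∈ layer t, rs α) hy
    (fun δ hδ y' hy' => ?_) (by simp) (fun a b ha hb => by simp only [lie_add]; exact add_mem ha hb)
  exact hmem γ hγ δ hδ x' hx' y' hy'
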